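/- Theorem 2 (probabilistic completeness of DTInv): There exists a constant C > 0 such that the following holds for all d ≥ 1, K ≥ 2, 0 < ε ≤ 1/2, and 0 < δ ≤ 1/2. Let μ be a (Borel) probability measure on Fin d → ℝ, let c : (Fin d → ℝ) → Bool be a measurable target labeling, and suppose the sample size n satisfies n ≥ C·(1/ε)·K·d·(log K)·log(1/(ε·δ)). Then the outer measure, with respect to the product measure μⁿ, of the set of samples x : Fin n → (Fin d → ℝ) for which some decision tree T over ℝ^d with at most K inner nodes satisfies eval(T, x i) = c(x i) for all i yet has true error μ({z | eval(T, z) ≠ c(z)}) > ε, is at most δ. In particular, any decision tree with at most K nodes that is consistent with a sample of this size has true error at most ε with probability at least 1 − δ. -/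

import Mathlib

open MeasureTheory

/-- A decision tree over `ℝ^d`: a leaf labeled by a Boolean, or an inner node with a
feature index, a real threshold, and left/right subtrees. -/
inductive DTree (d : ℕ) : Type
  | leaf (b : Bool) : DTree d
  | node (i : Fin d) (t : ℝ) (L R : DTree d) : DTree d

/-- Evaluation of a decision tree on a point `z : Fin d → ℝ`. -/
noncomputable def DTree.eval {d : ℕ} : DTree d → (Fin d → ℝ) → Bool
  | .leaf b, _ => b
  | .node i t L R, z => if z i ≤ t then L.eval z else R.eval z

/-- The number of inner nodes of a decision tree. -/
def DTree.innerNodes {d : ℕ} : DTree d → ℕ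
  | .leaf _ => 0
  | .node _ _ L R => 1 + L.innerNodes + R.innerNodes

open MeasureTheory ProbabilityTheory Set Filter ENNReal
open scoped Topology

namespace DTInv

inductive ITree (d M : ℕ) : Type
  | leaf (b : Bool) : ITree d M
  | node (i : Fin d) (j : Fin M) (L R : ITree d M) : ITree d M
deriving DecidableEq

namespace ITree

def innerI {d M : ℕ} : ITree d M → ℕ
  | leaf _ => 0
  | node _ _ L R => 1 + L.innerI + R.innerI

def nodesF {d M : ℕ} : ITree d M → Finset (Fin d × Fin M)
  | leaf _ => ∅
  | node i j L R => insert (i, j) (L.nodesF ∪ R.nodesF)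

noncomputable def evalI {d M : ℕ} (g : Fin d → Fin M → ℝ) : ITree d M → (Fin d → ℝ) → Bool
  | leaf b, _ => b
  | node i j L R, z => if z i ≤ g i j then evalI g L z else evalI g R z

lemma measurable_evalI {d M : ℕ} (g : Fin d → Fin M → ℝ) (T : ITree d M) :
    Measurable (evalI g T) := by
  induction T with
  | leaf b => exact measurable_const
  | node i j L R ihL ihR =>
    exact Measurable.ite (measurableSet_le (measurable_pi_apply i) measurable_const) ihL ihR

end ITree

open ITree

/-- All indexed trees built with "budget" `k` (contains all trees with exactly `k`
inner nodes). -/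
noncomputable def allI (d M : ℕ) : ℕ → Finset (ITree d M)
  | 0 => {ITree.leaf true, ITree.leaf false}
  | (k+1) =>
    ({ITree.leaf true, ITree.leaf false} : Finset (ITree d M)) ∪
      (Finset.range (k+1)).attach.biUnion (fun a =>
        ((Finset.univ : Finset (Fin d)) ×ˢ (Finset.univ : Finset (Fin M)) ×ˢ
            allI d M a.1 ×ˢ allI d M (k - a.1)).image
          (fun q => ITree.node q.1 q.2.1 q.2.2.1 q.2.2.2))
  decreasing_by
  · exact Finset.mem_range.mp a.2
  · exact Nat.lt_succ_of_le (Nat.sub_le _ _)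

lemma mem_allI {d M : ℕ} (T : ITree d M) : T ∈ allI d M T.innerI := by
  induction T with
  | leaf b =>
    cases b <;> simp [allI, innerI]
  | node i j L R ihL ihR =>
    have h : (ITree.node i j L R).innerI = (L.innerI + R.innerI) + 1 := by
      simp [innerI]; omega
    rw [h, allI]
    apply Finset.mem_union_right
    rw [Finset.mem_biUnion]
    refine ⟨⟨L.innerI, Finset.mem_range.mpr (by omega)⟩, Finset.mem_attach _ _, ?_⟩
    rw [Finset.mem_image]
    refine ⟨(i, j, L, R), ?_, rfl⟩
    simp only [Finset.mem_product]
    refine ⟨Finset.mem_univ _, Finset.mem_univ _, ihL, ?_⟩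
    have : L.innerI + R.innerI - L.innerI = R.innerI := by omega
    rw [this]; exact ihR

lemma card_allI {d M K : ℕ} (hd : 1 ≤ d) (hM : 1 ≤ M) :
    ∀ k, k ≤ K → (allI d M k).card ≤ ((K+1)*d*M+2)^(2*k+1) := by
  set B := (K+1)*d*M+2 with hB
  have hB2 : 2 ≤ B := Nat.le_add_left 2 _
  intro k
  induction k using Nat.strong_induction_on with
  | _ k ih =>
    intro hk
    cases k with
    | zero =>
      rw [allI]
      calc ({ITree.leaf true, ITree.leaf false} : Finset (ITree d M)).card ≤ 2 :=
          le_trans (Finset.card_insert_le _ _) (by rw [Finset.card_singleton])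
        _ ≤ B^(2*0+1) := by simpa using hB2
    | succ k =>
      have hk' : k + 1 ≤ K := hk
      rw [allI]
      refine (Finset.card_union_le _ _).trans ?_
      have h2 : ({ITree.leaf true, ITree.leaf false} : Finset (ITree d M)).card ≤ 2 :=
        le_trans (Finset.card_insert_le _ _) (by rw [Finset.card_singleton])
      refine le_trans (add_le_add h2 (Finset.card_biUnion_le)) ?_
      have hterm : ∀ a : {x // x ∈ Finset.range (k+1)},
          (((Finset.univ : Finset (Fin d)) ×ˢ (Finset.univ : Finset (Fin M)) ×ˢ
            allI d M a.1 ×ˢ allI d M (k - a.1)).image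
          (fun q => ITree.node q.1 q.2.1 q.2.2.1 q.2.2.2)).card ≤ d*M*B^(2*k+2) := by
        intro a
        have ha : a.1 ≤ k := Nat.lt_succ_iff.mp (Finset.mem_range.mp a.2)
        refine Finset.card_image_le.trans ?_
        rw [Finset.card_product, Finset.card_product, Finset.card_product,
          Finset.card_univ, Finset.card_univ, Fintype.card_fin, Fintype.card_fin]
        have e1 : (allI d M a.1).card ≤ B^(2*a.1+1) :=
          ih a.1 (Nat.lt_succ_of_le ha) (le_trans ha (Nat.le_of_succ_le hk))
        have e2 : (allI d M (k - a.1)).card ≤ B^(2*(k-a.1)+1) :=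
          ih (k - a.1) (Nat.lt_succ_of_le (Nat.sub_le _ _))
            (le_trans (Nat.sub_le _ _) (Nat.le_of_succ_le hk))
        calc d * (M * ((allI d M a.1).card * (allI d M (k - a.1)).card))
            ≤ d * (M * (B^(2*a.1+1) * B^(2*(k-a.1)+1))) := by
              exact Nat.mul_le_mul_left _ (Nat.mul_le_mul_left _ (Nat.mul_le_mul e1 e2))
          _ = d*M*B^(2*k+2) := by
              rw [← pow_add]
              have : 2*a.1+1 + (2*(k-a.1)+1) = 2*k+2 := by omega
              rw [this]; ring
      refine le_trans (add_le_add_right (Finset.sum_le_card_nsmul _ _ _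
        (fun a _ => hterm a)) 2) ?_
      rw [Finset.card_attach, Finset.card_range, smul_eq_mul]
      have hkK : k + 1 ≤ K := hk
      have hBpow : 1 ≤ B^(2*k+2) := Nat.one_le_pow _ _ (by omega)
      calc 2 + (k+1) * (d*M*B^(2*k+2)) ≤ 2*B^(2*k+2) + (K+1)*d*M*B^(2*k+2) := by
            have : (k+1) * (d*M*B^(2*k+2)) ≤ (K+1)*d*M*B^(2*k+2) := by
              have : (k+1)*d*M ≤ (K+1)*d*M := by
                exact Nat.mul_le_mul_right _ (Nat.mul_le_mul_right _ (by omega))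
              calc (k+1) * (d*M*B^(2*k+2)) = (k+1)*d*M*B^(2*k+2) := by ring
                _ ≤ (K+1)*d*M*B^(2*k+2) := Nat.mul_le_mul_right _ this
            have h2' : 2 ≤ 2*B^(2*k+2) := by
              calc 2 = 2*1 := by ring
                _ ≤ 2*B^(2*k+2) := Nat.mul_le_mul_left _ hBpow
            omega
        _ = B * B^(2*k+2) := by rw [hB]; ring
        _ = B^(2*(k+1)+1) := by
            rw [show 2*(k+1)+1 = 2*k+2+1 from by omega]
            exact (pow_succ' B (2*k+2)).symm

/-- trees with at most `K` inner nodes -/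
noncomputable def allLe (d M K : ℕ) : Finset (ITree d M) :=
  (Finset.range (K+1)).biUnion (allI d M)

lemma mem_allLe {d M K : ℕ} (T : ITree d M) (h : T.innerI ≤ K) : T ∈ allLe d M K :=
  Finset.mem_biUnion.mpr ⟨T.innerI, Finset.mem_range.mpr (by omega), mem_allI T⟩

lemma card_allLe {d M K : ℕ} (hd : 1 ≤ d) (hM : 1 ≤ M) :
    (allLe d M K).card ≤ ((K+1)*d*M+2)^(2*K+2) := by
  set B := (K+1)*d*M+2 with hB
  have hB2 : 2 ≤ B := Nat.le_add_left 2 _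
  have hKB : K+1 ≤ B := by
    have h1 : K+1 ≤ (K+1)*d*M := by
      calc K+1 = (K+1)*1*1 := by ring
        _ ≤ (K+1)*d*M := Nat.mul_le_mul (Nat.mul_le_mul_left _ hd) hM
    exact h1.trans (Nat.le_add_right _ 2)
  refine Finset.card_biUnion_le.trans ?_
  have : ∀ k ∈ Finset.range (K+1), (allI d M k).card ≤ B^(2*K+1) := by
    intro k hk
    have hkK : k ≤ K := by have := Finset.mem_range.mp hk; omega
    refine (card_allI (K := K) hd hM k hkK).trans ?_
    exact Nat.pow_le_pow_right (le_trans one_le_two hB2) (by omega)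
  refine (Finset.sum_le_card_nsmul _ _ _ this).trans ?_
  rw [Finset.card_range, smul_eq_mul]
  calc (K+1) * B^(2*K+1) ≤ B * B^(2*K+1) := Nat.mul_le_mul_right _ hKB
    _ = B^(2*K+2) := by
        rw [show 2*K+2 = 2*K+1+1 from by omega]
        exact (pow_succ' B (2*K+1)).symm

end DTInv


namespace DTInv

/-- cofinal monotone sequence in a nonempty, max-closed set of reals -/
lemma exists_cofinal_seq (A : Set ℝ) (hne : A.Nonempty)
    (hmax : ∀ x ∈ A, ∀ y ∈ A, max x y ∈ A) :
    ∃ u : ℕ → ℝ, Monotone u ∧ (∀ k, u k ∈ A) ∧ ∀ y ∈ A, ∃ k, y ≤ u k := by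
  by_cases hbdd : BddAbove A
  · by_cases hsup : sSup A ∈ A
    · exact ⟨fun _ => sSup A, monotone_const, fun _ => hsup,
        fun y hy => ⟨0, le_csSup hbdd hy⟩⟩
    · obtain ⟨u, hmono, htend, hmem⟩ := exists_seq_tendsto_sSup hne hbdd
      refine ⟨u, hmono, hmem, fun y hy => ?_⟩
      have hlt : y < sSup A := lt_of_le_of_ne (le_csSup hbdd hy)
        (fun h => hsup (h ▸ hy))
      have := (htend.eventually (eventually_gt_nhds hlt)).exists
      obtain ⟨k, hk⟩ := this
      exact ⟨k, hk.le⟩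
  · have h : ∀ k : ℕ, ∃ x ∈ A, (k : ℝ) ≤ x := by
      intro k
      by_contra hcon
      push_neg at hcon
      exact hbdd ⟨k, fun x hx => (hcon x hx).le⟩
    choose v hvA hvk using h
    let u : ℕ → ℝ := fun k => Nat.rec (v 0) (fun k uk => max uk (v (k+1))) k
    have humem : ∀ k, u k ∈ A := by
      intro k
      induction k with
      | zero => exact hvA 0
      | succ k ih => exact hmax _ ih _ (hvA (k+1))
    have humono : Monotone u := by
      apply monotone_nat_of_le_succ
      intro k
      exact le_max_left _ _
    have huv : ∀ k, v k ≤ u k := by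
      intro k
      cases k with
      | zero => exact le_refl _
      | succ k => exact le_max_right _ _
    refine ⟨u, humono, humem, fun y hy => ?_⟩
    obtain ⟨k, hk⟩ := exists_nat_ge y
    exact ⟨k, hk.trans ((hvk k).trans (huv k))⟩

/-- key 1-d bound -/
lemma measure_le_of_iic (ν : Measure ℝ) {A : Set ℝ}
    (hmax : ∀ x ∈ A, ∀ y ∈ A, max x y ∈ A) (r : ℝ≥0∞)
    (hb : ∀ x ∈ A, ν (A ∩ Iic x) ≤ r) : ν A ≤ r := by
  rcases A.eq_empty_or_nonempty with h | hne
  · simp [h]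
  obtain ⟨u, hmono, hmem, hcof⟩ := exists_cofinal_seq A hne hmax
  have hAeq : A = ⋃ k, A ∩ Iic (u k) := by
    apply Subset.antisymm
    · intro y hy
      obtain ⟨k, hk⟩ := hcof y hy
      exact mem_iUnion.mpr ⟨k, hy, hk⟩
    · exact iUnion_subset fun k => inter_subset_left
  rw [hAeq]
  have hm : Monotone (fun k => A ∩ Iic (u k)) := by
    intro a b hab
    exact inter_subset_inter_right _ (Iic_subset_Iic.mpr (hmono hab))
  rw [hm.measure_iUnion]
  exact iSup_le fun k => hb (u k) (hmem k)

lemma cdf_strip_bound (ν : Measure ℝ) [IsProbabilityMeasure ν] (t c : ℝ) :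
    ν {x | t < x ∧ cdf ν x ≤ c} ≤ ENNReal.ofReal (c - cdf ν t) := by
  apply measure_le_of_iic
  · rintro x ⟨hx1, hx2⟩ y ⟨hy1, hy2⟩
    rcases max_cases x y with ⟨h, -⟩ | ⟨h, -⟩ <;> rw [h]
    exacts [⟨hx1, hx2⟩, ⟨hy1, hy2⟩]
  · rintro x ⟨hx1, hx2⟩
    have hsub : {x_1 | t < x_1 ∧ cdf ν x_1 ≤ c} ∩ Iic x ⊆ Ioc t x := by
      rintro y ⟨⟨hy1, -⟩, hy2⟩; exact ⟨hy1, hy2⟩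
    refine (measure_mono hsub).trans ?_
    have : ν (Ioc t x) = ν (Iic x) - ν (Iic t) := by
      rw [← Iic_sdiff_Iic]
      exact measure_diff (Iic_subset_Iic.mpr hx1.le) measurableSet_Iic.nullMeasurableSet
        (measure_ne_top _ _)
    rw [this, ← ofReal_cdf ν x, ← ofReal_cdf ν t, ← ENNReal.ofReal_sub _ (cdf_nonneg ν t)]
    exact ENNReal.ofReal_le_ofReal (by linarith)

lemma cdf_bot_bound (ν : Measure ℝ) [IsProbabilityMeasure ν] (c : ℝ) :
    ν {x | cdf ν x ≤ c} ≤ ENNReal.ofReal c := by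
  apply measure_le_of_iic
  · rintro x hx y hy
    rcases max_cases x y with ⟨h, -⟩ | ⟨h, -⟩ <;> rw [h] <;> assumption
  · rintro x hx
    refine (measure_mono (inter_subset_right)).trans ?_
    rw [← ofReal_cdf ν x]
    exact ENNReal.ofReal_le_ofReal hx

/-- quantile -/
noncomputable def quant (ν : Measure ℝ) (p : ℝ) : ℝ :=
  sInf {t | p ≤ cdf ν t}

lemma quant_spec (ν : Measure ℝ) {p : ℝ} (hp0 : 0 < p) (hp1 : p < 1) :
    p ≤ cdf ν (quant ν p) ∧ ∀ t, t < quant ν p → cdf ν t < p := by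
  set S := {t | p ≤ cdf ν t} with hS
  have hne : S.Nonempty := by
    have := (tendsto_cdf_atTop ν).eventually (eventually_ge_nhds hp1)
    obtain ⟨t, ht⟩ := this.exists
    exact ⟨t, ht⟩
  have hbdd : BddBelow S := by
    have h := (tendsto_cdf_atBot ν).eventually (eventually_lt_nhds hp0)
    obtain ⟨t0, ht0⟩ := eventually_atBot.mp h
    refine ⟨t0, fun s hs => ?_⟩
    by_contra hcon
    push_neg at hcon
    exact absurd hs (not_le.mpr (ht0 s hcon.le))
  constructor
  · -- right continuity
    have hgt : ∀ t, quant ν p < t → p ≤ cdf ν t := by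
      intro t ht
      obtain ⟨s, hsS, hst⟩ := (csInf_lt_iff hbdd hne).mp ht
      exact le_trans hsS ((cdf ν).mono hst.le)
    have hrc : ContinuousWithinAt (cdf ν) (Ioi (quant ν p)) (quant ν p) :=
      ((cdf ν).right_continuous _).mono Ioi_subset_Ici_self
    have : Tendsto (cdf ν) (𝓝[>] (quant ν p)) (𝓝 (cdf ν (quant ν p))) := hrc
    refine ge_of_tendsto this ?_
    filter_upwards [self_mem_nhdsWithin] with t ht
    exact hgt t ht
  · intro t ht
    by_contra hcon
    push_neg at hcon
    exact absurd (csInf_le hbdd hcon) (not_le.mpr ht)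

end DTInv

namespace DTInv
open ITree

section Grid

variable {d : ℕ} (μ : Measure (Fin d → ℝ)) (m M : ℕ)

noncomputable def nu (i : Fin d) : Measure ℝ := μ.map (fun z => z i)

instance nu_prob [IsProbabilityMeasure μ] (i : Fin d) : IsProbabilityMeasure (nu μ i) :=
  Measure.isProbabilityMeasure_map (measurable_pi_apply i).aemeasurable

noncomputable def gridQ (i : Fin d) (j : Fin M) : ℝ :=
  quant (nu μ i) (((j : ℕ) + 1) / m)

def StripS (i : Fin d) (j : Fin M) : Set (Fin d → ℝ) :=
  {z | gridQ μ m M i j < z i ∧ cdf (nu μ i) (z i) ≤ ((j : ℕ) + 2) / m}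

def BotS (i : Fin d) : Set (Fin d → ℝ) :=
  {z | cdf (nu μ i) (z i) ≤ 1 / m}

noncomputable def SsetOf (T : ITree d M) : Set (Fin d → ℝ) :=
  (⋃ i, BotS μ m i) ∪ ⋃ p ∈ T.nodesF, StripS μ m M p.1 p.2

lemma measurable_cdf_comp (i : Fin d) : Measurable (fun z : Fin d → ℝ => cdf (nu μ i) (z i)) :=
  ((cdf (nu μ i)).mono.measurable).comp (measurable_pi_apply i)

lemma measurableSet_StripS (i : Fin d) (j : Fin M) : MeasurableSet (StripS μ m M i j) := by
  apply MeasurableSet.inter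
  · exact measurableSet_lt measurable_const (measurable_pi_apply i)
  · exact measurableSet_le (measurable_cdf_comp μ i) measurable_const

lemma measurableSet_BotS (i : Fin d) : MeasurableSet (BotS μ m i) :=
  measurableSet_le (measurable_cdf_comp μ i) measurable_const

lemma measurableSet_SsetOf (T : ITree d M) : MeasurableSet (SsetOf μ m M T) :=
  MeasurableSet.union (MeasurableSet.iUnion fun i => measurableSet_BotS μ m i)
    (T.nodesF.measurableSet_biUnion fun p _ => measurableSet_StripS μ m M p.1 p.2)

variable [IsProbabilityMeasure μ]

lemma strip_mass (hm : 0 < m) (hMm : M + 1 = m) (i : Fin d) (j : Fin M) :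
    μ (StripS μ m M i j) ≤ ENNReal.ofReal (1 / m) := by
  have hA : StripS μ m M i j =
      (fun z : Fin d → ℝ => z i) ⁻¹' {x | gridQ μ m M i j < x ∧ cdf (nu μ i) x ≤ ((j:ℕ)+2)/m} :=
    rfl
  have hmeas : MeasurableSet {x | gridQ μ m M i j < x ∧ cdf (nu μ i) x ≤ ((j:ℕ)+2)/m} := by
    apply MeasurableSet.inter
    · exact measurableSet_lt measurable_const measurable_id
    · exact measurableSet_le ((cdf (nu μ i)).mono.measurable) measurable_const
  rw [hA, ← Measure.map_apply (measurable_pi_apply i) hmeas]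
  refine (cdf_strip_bound (nu μ i) _ _).trans ?_
  apply ENNReal.ofReal_le_ofReal
  have hm' : (0:ℝ) < (m:ℝ) := by exact_mod_cast hm
  have hq : (((j:ℕ):ℝ)+1)/(m:ℝ) ≤ cdf (nu μ i) (gridQ μ m M i j) := by
    have h0 : (0 : ℝ) < (((j:ℕ):ℝ)+1)/(m:ℝ) := by positivity
    have h1 : (((j:ℕ):ℝ)+1)/(m:ℝ) < 1 := by
      rw [div_lt_one hm']
      have : (j:ℕ) < M := j.2
      exact_mod_cast (by omega : (j:ℕ) + 1 < m)
    exact (quant_spec (nu μ i) h0 h1).1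
  have heq : (((j:ℕ):ℝ)+2)/(m:ℝ) - (((j:ℕ):ℝ)+1)/(m:ℝ) = 1/(m:ℝ) := by
    field_simp
    norm_num
  linarith

lemma bot_mass (i : Fin d) : μ (BotS μ m i) ≤ ENNReal.ofReal (1 / m) := by
  have hA : BotS μ m i = (fun z : Fin d → ℝ => z i) ⁻¹' {x | cdf (nu μ i) x ≤ 1/m} := rfl
  have hmeas : MeasurableSet {x | cdf (nu μ i) x ≤ 1/m} :=
    measurableSet_le ((cdf (nu μ i)).mono.measurable) measurable_const
  rw [hA, ← Measure.map_apply (measurable_pi_apply i) hmeas]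
  exact cdf_bot_bound (nu μ i) _

lemma card_nodesF {d' M' : ℕ} (T : ITree d' M') : T.nodesF.card ≤ T.innerI := by
  induction T with
  | leaf b => simp [ITree.nodesF, ITree.innerI]
  | node i j L R ihL ihR =>
    refine (Finset.card_insert_le _ _).trans ?_
    have := (Finset.card_union_le L.nodesF R.nodesF)
    simp only [ITree.innerI]
    omega

lemma sset_mass (hm : 0 < m) (hMm : M + 1 = m) {K : ℕ} (T : ITree d M)
    (hT : T.innerI ≤ K) :
    μ (SsetOf μ m M T) ≤ ENNReal.ofReal ((d + K) / m) := by
  refine (measure_union_le _ _).trans ?_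
  have h1 : μ (⋃ i, BotS μ m i) ≤ (d : ℝ≥0∞) * ENNReal.ofReal (1/m) := by
    refine (measure_iUnion_fintype_le _ _).trans ?_
    calc ∑ i : Fin d, μ (BotS μ m i) ≤ ∑ _i : Fin d, ENNReal.ofReal (1/m) :=
          Finset.sum_le_sum (fun i _ => bot_mass μ m i)
      _ = (d : ℝ≥0∞) * ENNReal.ofReal (1/m) := by
          rw [Finset.sum_const, Finset.card_univ, Fintype.card_fin, nsmul_eq_mul]
  have h2 : μ (⋃ p ∈ T.nodesF, StripS μ m M p.1 p.2) ≤ (K : ℝ≥0∞) * ENNReal.ofReal (1/m) := by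
    refine (measure_biUnion_finset_le _ _).trans ?_
    calc ∑ p ∈ T.nodesF, μ (StripS μ m M p.1 p.2)
        ≤ ∑ _p ∈ T.nodesF, ENNReal.ofReal (1/m) :=
          Finset.sum_le_sum (fun p _ => strip_mass μ m M hm hMm p.1 p.2)
      _ = (T.nodesF.card : ℝ≥0∞) * ENNReal.ofReal (1/m) := by
          rw [Finset.sum_const, nsmul_eq_mul]
      _ ≤ (K : ℝ≥0∞) * ENNReal.ofReal (1/m) := by
          apply mul_le_mul_left
          exact_mod_cast Nat.cast_le.mpr ((card_nodesF T).trans hT)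
  refine (add_le_add h1 h2).trans ?_
  rw [← add_mul, ← Nat.cast_add, ← ENNReal.ofReal_natCast, ← ENNReal.ofReal_mul (by positivity)]
  apply ENNReal.ofReal_le_ofReal
  rw [mul_one_div]
  push_cast
  exact le_rfl

end Grid

end DTInv

namespace DTInv
open ITree

section TauSec
variable {d M : ℕ}

noncomputable def tau (g : Fin d → Fin M → ℝ) : DTree d → ITree d M
  | .leaf b => .leaf b
  | .node i t L R =>
    if h : (Finset.univ.filter (fun j => g i j ≤ t)).Nonempty
    then .node i ((Finset.univ.filter (fun j => g i j ≤ t)).max' h) (tau g L) (tau g R)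
    else tau g R

lemma innerI_tau_le (g : Fin d → Fin M → ℝ) (T : DTree d) :
    (tau g T).innerI ≤ T.innerNodes := by
  induction T with
  | leaf b => simp [tau, ITree.innerI, DTree.innerNodes]
  | node i t L R ihL ihR =>
    rw [tau]
    by_cases hs : (Finset.univ.filter (fun j => g i j ≤ t)).Nonempty
    · rw [dif_pos hs]
      simp only [ITree.innerI, DTree.innerNodes]
      omega
    · rw [dif_neg hs]
      simp only [DTree.innerNodes]
      omega

end TauSec

section CoveringSec

variable {d : ℕ} (μ : Measure (Fin d → ℝ)) (m M : ℕ)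

lemma not_mem_SsetOf {T : ITree d M} {z : Fin d → ℝ} :
    z ∉ SsetOf μ m M T ↔
      (∀ i, z ∉ BotS μ m i) ∧ ∀ p ∈ T.nodesF, z ∉ StripS μ m M p.1 p.2 := by
  simp only [SsetOf, Set.mem_union, Set.mem_iUnion, not_or, not_exists]

lemma covering (hm2 : 2 ≤ m) (hMm : M + 1 = m) (T : DTree d) :
    ∀ z : Fin d → ℝ, z ∉ SsetOf μ m M (tau (gridQ μ m M) T) →
      T.eval z = evalI (gridQ μ m M) (tau (gridQ μ m M) T) z := by
  have hm' : (0:ℝ) < (m:ℝ) := by exact_mod_cast (by omega : 0 < m)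
  set g := gridQ μ m M with hg
  induction T with
  | leaf b =>
    intro z hz
    rw [tau]
    simp [DTree.eval, evalI]
  | node i t L R ihL ihR =>
    intro z hz
    by_cases hs : (Finset.univ.filter (fun j => g i j ≤ t)).Nonempty
    · set s := Finset.univ.filter (fun j => g i j ≤ t) with hs'
      set jm := s.max' hs with hjm
      have htau : tau g (DTree.node i t L R) = ITree.node i jm (tau g L) (tau g R) := by
        rw [tau, dif_pos hs]
      rw [htau] at hz ⊢
      obtain ⟨hzB, hzS⟩ := (not_mem_SsetOf μ m M).mp hz
      have hnodes : (ITree.node i jm (tau g L) (tau g R)).nodesF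
          = insert (i, jm) ((tau g L).nodesF ∪ (tau g R).nodesF) := rfl
      have hzL : z ∉ SsetOf μ m M (tau g L) :=
        (not_mem_SsetOf μ m M).mpr ⟨hzB, fun p hp => hzS p (by
          rw [hnodes]; exact Finset.mem_insert_of_mem (Finset.mem_union_left _ hp))⟩
      have hzR : z ∉ SsetOf μ m M (tau g R) :=
        (not_mem_SsetOf μ m M).mpr ⟨hzB, fun p hp => hzS p (by
          rw [hnodes]; exact Finset.mem_insert_of_mem (Finset.mem_union_right _ hp))⟩
      have hgt : g i jm ≤ t := (Finset.mem_filter.mp (s.max'_mem hs)).2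
      by_cases hzi : z i ≤ g i jm
      · have hzt : z i ≤ t := le_trans hzi hgt
        simp only [DTree.eval, evalI, if_pos hzi, if_pos hzt]
        exact ihL z hzL
      · have hzt : ¬ z i ≤ t := by
          intro hzt
          apply hzS (i, jm) (by rw [hnodes]; exact Finset.mem_insert_self _ _)
          refine ⟨lt_of_not_ge hzi, ?_⟩
          by_cases htop : (jm : ℕ) + 1 < M
          · set j' : Fin M := ⟨(jm:ℕ)+1, htop⟩ with hj'def
            have hj' : j' ∉ s := by
              intro hmem
              have := s.le_max' j' hmem
              rw [← hjm] at this
              have : (j' : ℕ) ≤ (jm : ℕ) := this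
              simp [hj'def] at this
            have hgj' : t < g i j' := by
              by_contra hle
              push_neg at hle
              exact hj' (by rw [hs']; exact Finset.mem_filter.mpr ⟨Finset.mem_univ _, hle⟩)
            have h0 : (0:ℝ) < (((j':ℕ):ℝ)+1)/(m:ℝ) := by positivity
            have h1 : (((j':ℕ):ℝ)+1)/(m:ℝ) < 1 := by
              rw [div_lt_one hm']
              have : (j':ℕ) < M := j'.2
              exact_mod_cast (by omega : (j':ℕ) + 1 < m)
            have hlt : cdf (nu μ i) (z i) < (((j':ℕ):ℝ)+1)/(m:ℝ) :=
              (quant_spec (nu μ i) h0 h1).2 (z i) (lt_of_le_of_lt hzt hgj')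
            have hcast : (((j':ℕ):ℝ)+1) = (((jm:ℕ):ℝ)+2) := by
              rw [hj'def]; push_cast; ring
            rw [hcast] at hlt
            exact hlt.le
          · have h1m : (1:ℝ) ≤ (((jm:ℕ):ℝ)+2)/(m:ℝ) := by
              rw [le_div_iff₀ hm']
              have : m ≤ (jm:ℕ) + 2 := by omega
              have := (Nat.cast_le (α := ℝ)).mpr this
              push_cast at this ⊢
              linarith
            exact le_trans (cdf_le_one _ _) h1m
        simp only [DTree.eval, evalI, if_neg hzi, if_neg hzt]
        exact ihR z hzR
    · have htau : tau g (DTree.node i t L R) = tau g R := by rw [tau, dif_neg hs]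
      rw [htau] at hz ⊢
      have hM0 : 0 < M := by omega
      set j0 : Fin M := ⟨0, hM0⟩ with hj0def
      have hj0 : ¬ g i j0 ≤ t := by
        intro hle
        exact hs ⟨j0, Finset.mem_filter.mpr ⟨Finset.mem_univ _, hle⟩⟩
      have hzt : ¬ z i ≤ t := by
        intro hzt
        apply ((not_mem_SsetOf μ m M).mp hz).1 i
        show cdf (nu μ i) (z i) ≤ 1/(m:ℝ)
        have h0 : (0:ℝ) < (((j0:ℕ):ℝ)+1)/(m:ℝ) := by positivity
        have h1 : (((j0:ℕ):ℝ)+1)/(m:ℝ) < 1 := by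
          rw [div_lt_one hm']
          have : (j0:ℕ) < M := j0.2
          exact_mod_cast (by omega : (j0:ℕ) + 1 < m)
        have hlt : cdf (nu μ i) (z i) < (((j0:ℕ):ℝ)+1)/(m:ℝ) :=
          (quant_spec (nu μ i) h0 h1).2 (z i) (lt_of_le_of_lt hzt (lt_of_not_ge hj0))
        have : (((j0:ℕ):ℝ)+1)/(m:ℝ) = 1/(m:ℝ) := by
          rw [hj0def]; norm_num
        rw [this] at hlt
        exact hlt.le
      simp only [DTree.eval, if_neg hzt]
      exact ihR z hz

end CoveringSec

end DTInv

namespace DTInv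
open ITree

section Transfer

variable {d : ℕ} (μ : Measure (Fin d → ℝ)) (m M : ℕ)

lemma measurable_evalD (T : DTree d) : Measurable T.eval := by
  induction T with
  | leaf b => exact measurable_const
  | node i t L R ihL ihR =>
    exact Measurable.ite (measurableSet_le (measurable_pi_apply i) measurable_const) ihL ihR

lemma measurableSet_eqBool {α : Type*} [MeasurableSpace α] {f h : α → Bool}
    (hf : Measurable f) (hh : Measurable h) : MeasurableSet {z | f z = h z} := by
  have : {z | f z = h z} =
      (f ⁻¹' {true} ∩ h ⁻¹' {true}) ∪ (f ⁻¹' {false} ∩ h ⁻¹' {false}) := by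
    ext z
    simp only [Set.mem_setOf_eq, Set.mem_union, Set.mem_inter_iff, Set.mem_preimage,
      Set.mem_singleton_iff]
    cases hfz : f z <;> cases hhz : h z <;> simp
  rw [this]
  exact ((hf (measurableSet_singleton _)).inter (hh (measurableSet_singleton _))).union
    ((hf (measurableSet_singleton _)).inter (hh (measurableSet_singleton _)))

lemma measurableSet_neBool {α : Type*} [MeasurableSpace α] {f h : α → Bool}
    (hf : Measurable f) (hh : Measurable h) : MeasurableSet {z | f z ≠ h z} := by
  have : {z | f z ≠ h z} = {z | f z = h z}ᶜ := by ext z; simp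
  rw [this]
  exact (measurableSet_eqBool hf hh).compl

noncomputable def ESet (c : (Fin d → ℝ) → Bool) (T' : ITree d M) : Set (Fin d → ℝ) :=
  SsetOf μ m M T' ∪ {z | evalI (gridQ μ m M) T' z = c z}

lemma measurableSet_ESet {c : (Fin d → ℝ) → Bool} (hc : Measurable c) (T' : ITree d M) :
    MeasurableSet (ESet μ m M c T') :=
  (measurableSet_SsetOf μ m M T').union
    (measurableSet_eqBool (measurable_evalI _ T') hc)

variable [IsProbabilityMeasure μ]

lemma error_transfer (hm2 : 2 ≤ m) (hMm : M + 1 = m) {c : (Fin d → ℝ) → Bool}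
    (hc : Measurable c) {K : ℕ} {ε : ℝ} (hε : 0 < ε) (hε1 : ε ≤ 1)
    (hmass : ((d : ℝ) + K) / m ≤ ε / 4) (T : DTree d) (hK : T.innerNodes ≤ K)
    (herr : ENNReal.ofReal ε < μ {z | T.eval z ≠ c z}) :
    μ (ESet μ m M c (tau (gridQ μ m M) T)) ≤ ENNReal.ofReal (1 - ε/2) := by
  set T' := tau (gridQ μ m M) T with hT'
  set S := SsetOf μ m M T' with hSdef
  have hS : μ S ≤ ENNReal.ofReal (ε/4) := by
    refine (sset_mass μ m M (by omega) hMm T' ((innerI_tau_le _ T).trans hK)).trans ?_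
    exact ENNReal.ofReal_le_ofReal hmass
  have hsub : {z | evalI (gridQ μ m M) T' z = c z} ⊆ {z | T.eval z = c z} ∪ S := by
    intro z hzeq
    by_cases hzS : z ∈ S
    · exact Or.inr hzS
    · left
      have := covering μ m M hm2 hMm T z hzS
      rw [Set.mem_setOf_eq, this]
      exact hzeq
  have heq : μ {z | T.eval z = c z} ≤ ENNReal.ofReal (1 - ε) := by
    have hcompl : {z | T.eval z = c z} = {z | T.eval z ≠ c z}ᶜ := by ext z; simp
    rw [hcompl, measure_compl (measurableSet_neBool (measurable_evalD T) hc)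
      (measure_ne_top _ _)]
    have h1 : μ Set.univ = 1 := measure_univ
    rw [h1]
    calc (1 : ℝ≥0∞) - μ {z | T.eval z ≠ c z} ≤ 1 - ENNReal.ofReal ε :=
          tsub_le_tsub_left herr.le 1
      _ = ENNReal.ofReal (1 - ε) := by
          rw [← ENNReal.ofReal_one, ← ENNReal.ofReal_sub _ hε.le]
  calc μ (ESet μ m M c T') ≤ μ S + μ {z | evalI (gridQ μ m M) T' z = c z} :=
        measure_union_le _ _
    _ ≤ μ S + (μ {z | T.eval z = c z} + μ S) := by
        refine add_le_add_right ?_ _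
        exact (measure_mono hsub).trans (measure_union_le _ _)
    _ ≤ ENNReal.ofReal (ε/4) + (ENNReal.ofReal (1-ε) + ENNReal.ofReal (ε/4)) := by
        exact add_le_add hS (add_le_add heq hS)
    _ = ENNReal.ofReal (1 - ε/2) := by
        rw [← ENNReal.ofReal_add (by linarith) (by linarith),
          ← ENNReal.ofReal_add (by linarith) (by linarith)]
        congr 1
        ring

lemma cylinder_measure (E : Set (Fin d → ℝ)) (hE : MeasurableSet E) (n : ℕ) :
    (Measure.pi fun _ : Fin n => μ) {x | ∀ i, x i ∈ E} = μ E ^ n := by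
  have h : {x : Fin n → Fin d → ℝ | ∀ i, x i ∈ E} = Set.pi Set.univ (fun _ => E) := by
    ext x; simp [Set.mem_pi]
  rw [h, Measure.pi_pi]
  simp [Finset.prod_const]

end Transfer

section Numeric

set_option maxHeartbeats 1000000 in
lemma Bb_bound {d K m M : ℕ} {ε : ℝ} (hd : 1 ≤ d) (hK : 2 ≤ K)
    (hε : 0 < ε) (hε2 : ε ≤ 1/2) (hm : (m:ℝ) ≤ 5*((d:ℝ)+K)/ε) (hMm : M + 1 = m) :
    (((K+1)*d*M+2 : ℕ) : ℝ) ≤ 21*(d:ℝ)^2*(K:ℝ)^2/ε := by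
  have hdR : (1:ℝ) ≤ d := by exact_mod_cast hd
  have hKR : (2:ℝ) ≤ K := by exact_mod_cast hK
  have hMle : (M:ℝ) ≤ (m:ℝ) := by exact_mod_cast (by omega : M ≤ m)
  have h1 : (((K+1)*d*M+2 : ℕ) : ℝ) = ((K:ℝ)+1)*(d:ℝ)*(M:ℝ) + 2 := by
    push_cast; ring
  have h2 : ((K:ℝ)+1)*(d:ℝ)*(M:ℝ) ≤ ((K:ℝ)+1)*(d:ℝ)*(5*((d:ℝ)+K)/ε) := by
    have hpos : (0:ℝ) ≤ ((K:ℝ)+1)*(d:ℝ) := by positivity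
    exact mul_le_mul_of_nonneg_left (hMle.trans hm) hpos
  have hdK : (d:ℝ)+K ≤ 2*(d:ℝ)*K := by nlinarith
  have h3 : ((K:ℝ)+1)*(d:ℝ)*(5*((d:ℝ)+K)/ε) ≤ 20*(d:ℝ)^2*(K:ℝ)^2/ε := by
    rw [show ((K:ℝ)+1)*(d:ℝ)*(5*((d:ℝ)+K)/ε) = (((K:ℝ)+1)*(d:ℝ)*(5*((d:ℝ)+K)))/ε
      from by ring]
    rw [div_le_div_iff_of_pos_right hε]
    nlinarith [hdK, hKR, hdR]
  have h4 : (2:ℝ) ≤ (d:ℝ)^2*(K:ℝ)^2/ε := by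
    rw [le_div_iff₀ hε]
    have hd2 : (1:ℝ) ≤ (d:ℝ)^2 := by nlinarith
    have hK2 : (4:ℝ) ≤ (K:ℝ)^2 := by nlinarith
    have hprod : (1:ℝ)*4 ≤ (d:ℝ)^2*(K:ℝ)^2 :=
      mul_le_mul hd2 hK2 (by norm_num) (by positivity)
    linarith [hprod]
  have hy := h2.trans h3
  rw [h1]
  have hfin : 20*(d:ℝ)^2*(K:ℝ)^2/ε + 2 ≤ 21*(d:ℝ)^2*(K:ℝ)^2/ε := by
    have : 20*(d:ℝ)^2*(K:ℝ)^2/ε + (d:ℝ)^2*(K:ℝ)^2/ε = 21*(d:ℝ)^2*(K:ℝ)^2/ε := by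
      ring
    linarith
  linarith

set_option maxHeartbeats 2000000 in
lemma final_numeric {d K n B : ℕ} {ε δ : ℝ} (hd : 1 ≤ d) (hK : 2 ≤ K)
    (hε : 0 < ε) (hε2 : ε ≤ 1/2) (hδ : 0 < δ) (hδ2 : δ ≤ 1/2)
    (hn : 500 * K * d * Real.log K * Real.log (1/(ε*δ)) ≤ ε * n)
    (hB2 : 2 ≤ B) (hBb : (B:ℝ) ≤ 21*(d:ℝ)^2*(K:ℝ)^2/ε) :
    ((B^(2*K+2) : ℕ) : ℝ) * (1-ε/2)^n ≤ δ := by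
  have hdR : (1:ℝ) ≤ d := by exact_mod_cast hd
  have hKR : (2:ℝ) ≤ K := by exact_mod_cast hK
  have hB2R : (2:ℝ) ≤ (B:ℝ) := by exact_mod_cast hB2
  have hL1 : (1/2 : ℝ) ≤ Real.log K := by
    have := Real.log_two_gt_d9
    have hlog : Real.log 2 ≤ Real.log K := Real.log_le_log (by norm_num) hKR
    linarith
  have hεδ : ε * δ ≤ 1/4 := by nlinarith
  have hεδpos : 0 < ε * δ := mul_pos hε hδ
  have hL2 : (1:ℝ) ≤ Real.log (1/(ε*δ)) := by
    have h4 : (4:ℝ) ≤ 1/(ε*δ) := by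
      rw [le_div_iff₀ hεδpos]; linarith
    have hmono := Real.log_le_log (by norm_num) h4
    have hlog4 : (1:ℝ) ≤ Real.log 4 := by
      have he : Real.log 4 = 2 * Real.log 2 := by
        rw [show (4:ℝ) = 2^2 by norm_num, Real.log_pow]; push_cast; ring
      have := Real.log_two_gt_d9
      linarith
    linarith
  set L1 := Real.log K with hL1def
  set L2 := Real.log (1/(ε*δ)) with hL2def
  have hlogd : Real.log d ≤ (d:ℝ) := by
    have := Real.log_le_sub_one_of_pos (by linarith : (0:ℝ) < (d:ℝ))
    linarith
  have hlog21 : Real.log 21 ≤ 20 := by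
    have := Real.log_le_sub_one_of_pos (by norm_num : (0:ℝ) < 21)
    linarith
  have hloginv : Real.log (1/ε) ≤ L2 := by
    apply Real.log_le_log (by positivity)
    rw [div_le_div_iff₀ hε hεδpos]
    nlinarith
  have hlogB : Real.log B ≤ 20 + 2*(d:ℝ) + 2*L1 + L2 := by
    have hBpos : (0:ℝ) < (B:ℝ) := by linarith
    have h1 : Real.log B ≤ Real.log (21*(d:ℝ)^2*(K:ℝ)^2/ε) := Real.log_le_log hBpos hBb
    have h2 : Real.log (21*(d:ℝ)^2*(K:ℝ)^2/ε)
        = Real.log 21 + 2*Real.log d + 2*L1 + Real.log (1/ε) := by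
      rw [show 21*(d:ℝ)^2*(K:ℝ)^2/ε = 21*(d:ℝ)^2*(K:ℝ)^2*(1/ε) by ring]
      rw [Real.log_mul (by positivity) (by positivity),
        Real.log_mul (by positivity) (by positivity),
        Real.log_mul (by positivity) (by positivity),
        Real.log_pow, Real.log_pow]
      push_cast
      ring
    linarith
  -- the exponent inequality
  have hexp : ((2*K+2 : ℕ) : ℝ) * Real.log B + Real.log (1/δ) ≤ ε * n / 2 := by
    have hlogδ : Real.log (1/δ) ≤ L2 := by
      apply Real.log_le_log (by positivity)
      rw [div_le_div_iff₀ hδ hεδpos]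
      nlinarith
    have hL1pos : (0:ℝ) < L1 := by linarith
    have hL2pos : (0:ℝ) < L2 := by linarith
    have hdpos : (0:ℝ) < (d:ℝ) := by linarith
    have hL1L2 : (1/2:ℝ) ≤ L1*L2 := by
      have := mul_le_mul hL1 hL2 (by norm_num) (by linarith)
      linarith
    have hdL1 : (1/2:ℝ) ≤ (d:ℝ)*L1 := by
      have := mul_le_mul hdR hL1 (by norm_num) (by linarith)
      linarith
    have hdL2 : (1:ℝ) ≤ (d:ℝ)*L2 := by
      have := mul_le_mul hdR hL2 (by norm_num) (by linarith)
      linarith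
    have hw : (1/2:ℝ) ≤ (d:ℝ)*L1*L2 := by
      have := mul_le_mul hdL1 hL2 (by norm_num) (by positivity)
      linarith
    have hwpos : (0:ℝ) ≤ (d:ℝ)*L1*L2 := by linarith
    have hsum : Real.log B ≤ 48 * (d:ℝ) * L1 * L2 := by
      have t1 : (20:ℝ) ≤ 40 * (d:ℝ) * L1 * L2 := by nlinarith [hw]
      have t2 : 2*(d:ℝ) ≤ 4 * (d:ℝ) * L1 * L2 := by
        nlinarith [mul_nonneg hdpos.le (by linarith [hL1L2] : (0:ℝ) ≤ 2*(L1*L2) - 1)]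
      have t3 : 2*L1 ≤ 2 * (d:ℝ) * L1 * L2 := by
        nlinarith [mul_nonneg hL1pos.le (by linarith [hdL2] : (0:ℝ) ≤ (d:ℝ)*L2 - 1)]
      have t4 : L2 ≤ 2 * (d:ℝ) * L1 * L2 := by
        nlinarith [mul_nonneg hL2pos.le (by linarith [hdL1] : (0:ℝ) ≤ 2*((d:ℝ)*L1) - 1)]
      linarith
    have hcast : ((2*K+2 : ℕ) : ℝ) = 2*(K:ℝ)+2 := by push_cast; ring
    have h2K : (2*(K:ℝ)+2) ≤ 3*K := by linarith
    have hBnn : (0:ℝ) ≤ Real.log B := Real.log_nonneg (by linarith)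
    have hmain : (2*(K:ℝ)+2) * Real.log B + Real.log (1/δ)
        ≤ 3*(K:ℝ) * (48 * (d:ℝ) * L1 * L2) + 2 * (d:ℝ) * L1 * L2 := by
      have hmm := mul_le_mul h2K hsum hBnn (by positivity : (0:ℝ) ≤ 3*(K:ℝ))
      have t4 : L2 ≤ 2 * (d:ℝ) * L1 * L2 := by
        nlinarith [mul_nonneg hL2pos.le (by linarith [hdL1] : (0:ℝ) ≤ 2*((d:ℝ)*L1) - 1)]
      have h5 : Real.log (1/δ) ≤ 2 * (d:ℝ) * L1 * L2 := by linarith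
      linarith
    have hfin : 3*(K:ℝ) * (48 * (d:ℝ) * L1 * L2) + 2 * (d:ℝ) * L1 * L2
        ≤ 250 * (K:ℝ) * (d:ℝ) * L1 * L2 := by
      nlinarith [mul_nonneg (by linarith : (0:ℝ) ≤ 106*(K:ℝ) - 2) hwpos]
    rw [hcast]
    have h500 : 500 * (K:ℝ) * (d:ℝ) * L1 * L2 ≤ ε * n := hn
    linarith
  -- conclude
  have hB0 : (0:ℝ) < (B:ℝ) := by linarith
  have hNb : (((B^(2*K+2) : ℕ)):ℝ) = (B:ℝ)^(2*K+2) := by push_cast; ring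
  rw [hNb]
  have hpow1 : (B:ℝ)^(2*K+2) = Real.exp (((2*K+2:ℕ):ℝ) * Real.log B) := by
    rw [← Real.log_pow]
    rw [Real.exp_log (by positivity)]
  have hpow2 : (1-ε/2)^n ≤ Real.exp ((n:ℝ) * (-ε/2)) := by
    have h1 : (0:ℝ) ≤ 1 - ε/2 := by linarith
    have h2 : 1 - ε/2 ≤ Real.exp (-ε/2) := by
      have := Real.add_one_le_exp (-ε/2)
      linarith
    calc (1-ε/2)^n ≤ (Real.exp (-ε/2))^n := pow_le_pow_left₀ h1 h2 n
      _ = Real.exp ((n:ℝ) * (-ε/2)) := (Real.exp_nat_mul _ n).symm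
  calc (B:ℝ)^(2*K+2) * (1-ε/2)^n
      ≤ Real.exp (((2*K+2:ℕ):ℝ) * Real.log B) * Real.exp ((n:ℝ) * (-ε/2)) := by
        rw [hpow1]
        exact mul_le_mul_of_nonneg_left hpow2 (Real.exp_nonneg _)
    _ = Real.exp (((2*K+2:ℕ):ℝ) * Real.log B + (n:ℝ) * (-ε/2)) := (Real.exp_add _ _).symm
    _ ≤ Real.exp (Real.log δ) := by
        apply Real.exp_le_exp.mpr
        have hlogδinv : Real.log (1/δ) = - Real.log δ := by
          rw [one_div, Real.log_inv]
        have hc : ((2*K+2:ℕ):ℝ) = 2*(K:ℝ)+2 := by push_cast; ring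
        rw [hc] at hexp ⊢
        nlinarith [hexp]
    _ = δ := Real.exp_log hδ

end Numeric

end DTInv


open DTInv DTInv.ITree

/-- probabilistic completeness of DTInv: there is a constant `C > 0`
such that for every dimension `d ≥ 1`, node bound `K ≥ 2`, accuracy `ε ≤ 1/2` and
confidence `δ ≤ 1/2`, any decision tree with at most `K` inner nodes that is
consistent with an i.i.d. sample of size `n ≥ C·(1/ε)·K·d·log K·log(1/(εδ))`
has true error at most `ε`, with probability at least `1 - δ`. -/
theorem dtinv_probabilistic_completeness :
    ∃ C : ℝ, 0 < C ∧
      ∀ (d K : ℕ), 1 ≤ d → 2 ≤ K →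
      ∀ ε δ : ℝ, 0 < ε → ε ≤ 1 / 2 → 0 < δ → δ ≤ 1 / 2 →
      ∀ μ : Measure (Fin d → ℝ), IsProbabilityMeasure μ →
      ∀ c : (Fin d → ℝ) → Bool, Measurable c →
      ∀ n : ℕ,
        C * (1 / ε) * K * d * Real.log K * Real.log (1 / (ε * δ)) ≤ (n : ℝ) →
        (Measure.pi fun _ : Fin n => μ)
          {x : Fin n → (Fin d → ℝ) | ∃ T : DTree d, T.innerNodes ≤ K ∧
            (∀ i : Fin n, T.eval (x i) = c (x i)) ∧
            ENNReal.ofReal ε < μ {z | T.eval z ≠ c z}}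
          ≤ ENNReal.ofReal δ := by
  classical
  refine ⟨500, by norm_num, ?_⟩
  intro d K hd hK ε δ hε hε2 hδ hδ2 μ hμ c hc n hn
  have hdR : (1:ℝ) ≤ d := by exact_mod_cast hd
  have hKR : (2:ℝ) ≤ K := by exact_mod_cast hK
  set m : ℕ := ⌈(4*((d:ℝ)+K))/ε⌉₊ with hmdef
  have hq : (24:ℝ) ≤ 4*((d:ℝ)+K)/ε := by
    rw [le_div_iff₀ hε]
    nlinarith
  have hmlb : 4*((d:ℝ)+K)/ε ≤ (m:ℝ) := Nat.le_ceil _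
  have hm24 : (24:ℝ) ≤ (m:ℝ) := le_trans hq hmlb
  have hm2 : 2 ≤ m := by
    have h2 : (2:ℝ) ≤ (m:ℝ) := by linarith
    exact_mod_cast h2
  set M : ℕ := m - 1 with hMdef
  have hMm : M + 1 = m := by omega
  have hM1 : 1 ≤ M := by omega
  have hmub : (m:ℝ) ≤ 5*((d:ℝ)+K)/ε := by
    have h1 : (m:ℝ) < 4*((d:ℝ)+K)/ε + 1 := Nat.ceil_lt_add_one (by positivity)
    have h2 : (1:ℝ) ≤ ((d:ℝ)+K)/ε := by
      rw [le_div_iff₀ hε]; nlinarith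
    have h3 : 4*((d:ℝ)+K)/ε + ((d:ℝ)+K)/ε = 5*((d:ℝ)+K)/ε := by ring
    linarith
  have hmass : ((d:ℝ)+K)/m ≤ ε/4 := by
    have hm0 : (0:ℝ) < (m:ℝ) := by linarith
    rw [div_le_div_iff₀ hm0 (by norm_num)]
    have h4 := (div_le_iff₀ hε).mp hmlb
    linarith
  set Good : Finset (ITree d M) :=
    (allLe d M K).filter (fun T' => μ (ESet μ m M c T') ≤ ENNReal.ofReal (1-ε/2))
    with hGood
  have hsub : {x : Fin n → (Fin d → ℝ) | ∃ T : DTree d, T.innerNodes ≤ K ∧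
        (∀ i : Fin n, T.eval (x i) = c (x i)) ∧
        ENNReal.ofReal ε < μ {z | T.eval z ≠ c z}}
      ⊆ ⋃ T' ∈ Good, {x : Fin n → (Fin d → ℝ) | ∀ i, x i ∈ ESet μ m M c T'} := by
    rintro x ⟨T, hTK, hTcons, hTerr⟩
    set T' := tau (gridQ μ m M) T with hT'def
    have hT'K : T'.innerI ≤ K := (innerI_tau_le _ T).trans hTK
    have hmem : T' ∈ allLe d M K := mem_allLe T' hT'K
    have hE : μ (ESet μ m M c T') ≤ ENNReal.ofReal (1-ε/2) :=
      error_transfer μ m M hm2 hMm hc hε (by linarith) hmass T hTK hTerr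
    refine Set.mem_iUnion₂.mpr ⟨T', Finset.mem_filter.mpr ⟨hmem, hE⟩, ?_⟩
    intro i
    by_cases hS : x i ∈ SsetOf μ m M T'
    · exact Or.inl hS
    · right
      show evalI (gridQ μ m M) T' (x i) = c (x i)
      rw [← covering μ m M hm2 hMm T (x i) hS]
      exact hTcons i
  refine le_trans (measure_mono hsub) ?_
  refine le_trans (measure_biUnion_finset_le _ _) ?_
  have hcyl : ∀ T' ∈ Good,
      (Measure.pi fun _ : Fin n => μ) {x | ∀ i, x i ∈ ESet μ m M c T'}
        ≤ (ENNReal.ofReal (1-ε/2))^n := by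
    intro T' hT'
    rw [cylinder_measure μ (ESet μ m M c T') (measurableSet_ESet μ m M hc T') n]
    exact pow_le_pow_left₀ (zero_le') (Finset.mem_filter.mp hT').2 n
  refine le_trans (Finset.sum_le_sum hcyl) ?_
  rw [Finset.sum_const, nsmul_eq_mul]
  set B : ℕ := (K+1)*d*M+2 with hBdef
  have hcard : Good.card ≤ B^(2*K+2) := by
    refine le_trans (Finset.card_filter_le _ _) ?_
    exact card_allLe hd hM1
  have hcast : (Good.card : ℝ≥0∞) ≤ ((B^(2*K+2) : ℕ) : ℝ≥0∞) := by
    exact_mod_cast hcard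
  refine le_trans (mul_le_mul_left hcast _) ?_
  have hn' : 500 * (K:ℝ) * d * Real.log K * Real.log (1/(ε*δ)) ≤ ε * n := by
    have hmul := mul_le_mul_of_nonneg_left hn hε.le
    have heq : ε * (500 * (1/ε) * K * d * Real.log K * Real.log (1/(ε*δ)))
        = 500 * (K:ℝ) * d * Real.log K * Real.log (1/(ε*δ)) := by
      field_simp
    rw [heq] at hmul
    exact hmul
  have hB2 : 2 ≤ B := Nat.le_add_left 2 _
  have hBb : (B:ℝ) ≤ 21*(d:ℝ)^2*(K:ℝ)^2/ε := by
    have := Bb_bound hd hK hε hε2 hmub hMm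
    rw [hBdef]
    exact_mod_cast this
  have hfinal : ((B^(2*K+2) : ℕ) : ℝ) * (1-ε/2)^n ≤ δ :=
    final_numeric hd hK hε hε2 hδ hδ2 hn' hB2 hBb
  calc ((B^(2*K+2) : ℕ) : ℝ≥0∞) * (ENNReal.ofReal (1-ε/2))^n
      = ENNReal.ofReal (((B^(2*K+2) : ℕ) : ℝ) * (1-ε/2)^n) := by
        rw [ENNReal.ofReal_mul (by positivity), ENNReal.ofReal_pow (by linarith),
          ENNReal.ofReal_natCast]
    _ ≤ ENNReal.ofReal δ := ENNReal.ofReal_le_ofReal hfinal
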